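/- Let γ = !![a,b;c,d] ∈ SL(2,ℝ) be hyperbolic with two real fixed points γ⁻ < 0 < γ⁺, let v ∈ SL(2,ℝ) satisfy v • i = i and lim_{t→+∞} v • (eᵗ i) = a/c in ℂ, and let t_γ ≥ 0 be such that e^{t_γ} i ∈ Axis(γ). Then there exists t' ≥ 0 with v • (e^{t'} i) ∈ Axis(γ); moreover, for every such t', the point v • (e^{t'} i) lies on the geodesic segment from e^{t_γ} i to γ • (e^{t_γ} i), i.e. dist(e^{t_γ} i, v • (e^{t'} i)) + dist(v • (e^{t'} i), γ • (e^{t_γ} i)) = dist(e^{t_γ} i, γ • (e^{t_γ} i)) = ℓ(γ); in particular dist(v • (e^{t'} i), e^{t_γ} i) ≤ ℓ(γ), dist(v • (e^{t'} i), γ • (e^{t_γ} i)) ≤ ℓ(γ), and |t_γ − t'| ≤ ℓ(γ). -/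

import Mathlib

open UpperHalfPlane Matrix Real Filter Topology
open scoped MatrixGroups

noncomputable section

namespace BellisFormal

/-- The point `eᵗ i` of the upper half-plane. -/
def vray (t : ℝ) : ℍ := ⟨⟨0, Real.exp t⟩, Real.exp_pos t⟩

/-- Translation length of `γ`. -/
def transLength (γ : SL(2, ℝ)) : ℝ := ⨅ z : ℍ, dist z (γ • z)

/-- `γ` is hyperbolic: `|tr γ| > 2`. -/
def IsHyperbolic (γ : SL(2, ℝ)) : Prop :=
  2 < |Matrix.trace (γ : Matrix (Fin 2) (Fin 2) ℝ)|

/-- Axis of `γ`. -/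
def Axis (γ : SL(2, ℝ)) : Set ℍ := {z : ℍ | dist z (γ • z) = transLength γ}

/-- `x` is a real fixed point of the Möbius map of `γ`. -/
def IsFixedPt (γ : SL(2, ℝ)) (x : ℝ) : Prop :=
  γ 1 0 * x ^ 2 + (γ 1 1 - γ 0 0) * x - γ 0 1 = 0

def IsAttractingFixedPt (γ : SL(2, ℝ)) (x : ℝ) : Prop :=
  IsFixedPt γ x ∧ 1 < (γ 1 0 * x + γ 1 1) ^ 2

def IsRepellingFixedPt (γ : SL(2, ℝ)) (x : ℝ) : Prop :=
  IsFixedPt γ x ∧ (γ 1 0 * x + γ 1 1) ^ 2 < 1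

instance : TopologicalSpace SL(2, ℝ) :=
  TopologicalSpace.induced (fun g => (g : Matrix (Fin 2) (Fin 2) ℝ)) inferInstance

structure IsNestedSequence (γ : ℕ → SL(2, ℝ)) (γp γm : ℕ → ℝ) (t : ℕ → ℝ) : Prop where
  hyperbolic : ∀ n, IsHyperbolic (γ n)
  discrete : DiscreteTopology (Subgroup.closure (Set.range γ) : Subgroup SL(2, ℝ))
  attracting : ∀ n, IsAttractingFixedPt (γ n) (γp n)
  repelling : ∀ n, IsRepellingFixedPt (γ n) (γm n)
  plus_pos : ∀ n, 0 < γp n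
  plus_mono : StrictMono γp
  minus_neg : ∀ n, γm n < 0
  minus_anti : StrictAnti γm
  t_pos : ∀ n, 0 < t n
  axis_meets : ∀ n, ∀ s : ℝ, 0 ≤ s → (vray s ∈ Axis (γ n) ↔ s = t n)
  len_anti : StrictAnti fun n => transLength (γ n)
  len_tendsto : Filter.Tendsto (fun n => transLength (γ n)) Filter.atTop (nhds 0)

/-- geodesic flow matrix -/
def A (t : ℝ) : SL(2, ℝ) :=
  ⟨!![Real.exp (t / 2), 0; 0, Real.exp (-(t / 2))], by
    simp [Matrix.det_fin_two_of, ← Real.exp_add]⟩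

/-- horocyclic flow matrix -/
def N (s : ℝ) : SL(2, ℝ) :=
  ⟨!![1, s; 0, 1], by simp [Matrix.det_fin_two_of]⟩

/-- the distance `d₁` between unit tangent vectors encoded as elements of `SL(2,ℝ)` -/
def d1 (g h : SL(2, ℝ)) : ℝ :=
  dist (g • vray 0) (h • vray 0) + dist (g • vray 1) (h • vray 1)

/-- product `α 0 * α 1 * ⋯ * α n` -/
def seqProd (α : ℕ → SL(2, ℝ)) (n : ℕ) : SL(2, ℝ) :=
  ((List.range (n + 1)).map α).prod


/-- the point `a + y i` of the upper half-plane -/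
def mkPt (a y : ℝ) (hy : 0 < y) : ℍ := ⟨⟨a, y⟩, hy⟩

/-- the Busemann cocycle values `r_n = B_∞(β_n⁻¹ • i, i)` -/
def busR (α : ℕ → SL(2, ℝ)) (n : ℕ) : ℝ :=
  - Real.log (((seqProd α n)⁻¹ • UpperHalfPlane.I).im)


lemma dist_vray (s t : ℝ) : dist (vray s) (vray t) = |s - t| := by
  have h := (UpperHalfPlane.isometry_vertical_line 0).dist_eq s t
  simpa [vray, UpperHalfPlane.mk, Real.dist_eq] using h

lemma vray_zero : vray 0 = UpperHalfPlane.I := by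
  ext
  · simp [vray, UpperHalfPlane.coe, UpperHalfPlane.I, Complex.ext_iff]

lemma smul_coe (g : SL(2,ℝ)) (z : ℍ) :
    ((g • z : ℍ) : ℂ) = ((g 0 0 : ℝ) * z + (g 0 1 : ℝ)) / ((g 1 0 : ℝ) * z + (g 1 1 : ℝ)) := by
  rw [UpperHalfPlane.specialLinearGroup_apply]; simp

lemma denom_ne' (c d : ℝ) (z : ℍ) (h : c ≠ 0 ∨ d ≠ 0) : ((c : ℂ) * z + d) ≠ 0 := by
  intro h0
  have him : c * z.im = 0 := by
    have := congrArg Complex.im h0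
    simpa [UpperHalfPlane.coe_im] using this
  have hc : c = 0 := by
    rcases mul_eq_zero.mp him with h | h
    · exact h
    · exact absurd h z.im_ne_zero
  subst hc
  have hre : d = 0 := by
    have := congrArg Complex.re h0
    simpa using this
  tauto

lemma det_entries (g : SL(2,ℝ)) : g 0 0 * g 1 1 - g 0 1 * g 1 0 = 1 := by
  have := g.2
  rw [Matrix.det_fin_two] at this
  exact this

lemma sl2_ne_zero_row (g : SL(2,ℝ)) : g 1 0 ≠ 0 ∨ g 1 1 ≠ 0 := by
  by_contra h
  push_neg at h
  have := det_entries g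
  rw [h.1, h.2] at this
  simp at this

lemma smul_coords (g : SL(2,ℝ)) (z : ℍ) :
    (g • z : ℍ).re * ((g 1 0 * z.re + g 1 1)^2 + (g 1 0 * z.im)^2)
      = (g 0 0 * z.re + g 0 1) * (g 1 0 * z.re + g 1 1) + g 0 0 * g 1 0 * z.im^2
    ∧ (g • z : ℍ).im * ((g 1 0 * z.re + g 1 1)^2 + (g 1 0 * z.im)^2) = z.im := by
  set a := g 0 0; set b := g 0 1; set c := g 1 0; set d := g 1 1
  have hden : ((c : ℂ) * z + d) ≠ 0 := denom_ne' c d z (sl2_ne_zero_row g)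
  have h : ((g • z : ℍ) : ℂ) * ((c:ℂ) * z + d) = (a:ℂ) * z + b := by
    rw [smul_coe]; exact div_mul_cancel₀ _ hden
  have h1 := congrArg Complex.re h
  have h2 := congrArg Complex.im h
  simp only [Complex.add_re, Complex.add_im, Complex.mul_re, Complex.mul_im,
    Complex.ofReal_re, Complex.ofReal_im, UpperHalfPlane.coe_re, UpperHalfPlane.coe_im] at h1 h2
  have hdet := det_entries g
  constructor
  · linear_combination (c * z.re + d) * h1 + (c * z.im) * h2
  · linear_combination (c * z.re + d) * h2 - (c * z.im) * h1 + z.im * hdet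

lemma sq_eq_of_nonneg {x y : ℝ} (hx : 0 ≤ x) (hy : 0 ≤ y) (h : x^2 = y^2) : x = y := by
  nlinarith [sq_nonneg (x - y), sq_nonneg (x + y)]

lemma denomN_pos (g : SL(2,ℝ)) (z : ℍ) :
    0 < (g 1 0 * z.re + g 1 1)^2 + (g 1 0 * z.im)^2 := by
  rcases eq_or_ne (g 1 0) 0 with h | h
  · have h2 : g 1 1 ≠ 0 := by rcases sl2_ne_zero_row g with h'|h'; exact absurd h h'; exact h'
    rw [h]; simp [pow_two_pos_of_ne_zero, h2]
  · have : (g 1 0 * z.im)^2 > 0 := by positivity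
    positivity

/-- displacement formula -/
lemma disp (γ : SL(2,ℝ)) (a c xm xp : ℝ)
    (h00 : γ 0 0 = a) (h01 : γ 0 1 = -(c*xm*xp)) (h10 : γ 1 0 = c)
    (h11 : γ 1 1 = a - c*(xm+xp)) (z : ℍ) :
    Real.sinh (dist z (γ•z) / 2)^2 * (4*z.im^2)
      = c^2 * (((z.re-xm)*(z.re-xp) + z.im^2)^2 + (xp-xm)^2*z.im^2) := by
  have hN : 0 < (c*z.re + (a - c*(xm+xp)))^2 + (c*z.im)^2 := by
    have := denomN_pos γ z; rwa [h10, h11] at this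
  have hw := smul_coords γ z
  rw [h00, h01, h10, h11] at hw
  obtain ⟨hw1, hw2⟩ := hw
  have hs := UpperHalfPlane.sinh_half_dist z (γ•z)
  have him : 0 < (γ•z : ℍ).im := (γ•z : ℍ).im_pos
  have hzim : 0 < z.im := z.im_pos
  have hD2 : dist (z:ℂ) ((γ•z : ℍ):ℂ) ^ 2
      = (z.re - (γ•z : ℍ).re)^2 + (z.im - (γ•z : ℍ).im)^2 := by
    rw [Complex.dist_eq_re_im, Real.sq_sqrt (by positivity)]
    simp only [UpperHalfPlane.coe_re, UpperHalfPlane.coe_im]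
  have hsq : Real.sinh (dist z (γ•z) / 2)^2 * (4 * z.im * (γ•z : ℍ).im)
      = (z.re - (γ•z : ℍ).re)^2 + (z.im - (γ•z : ℍ).im)^2 := by
    rw [hs, div_pow, mul_pow, Real.sq_sqrt (by positivity : (0:ℝ) ≤ z.im * (γ•z:ℍ).im), hD2,
      div_mul_eq_mul_div, div_eq_iff (by positivity : ((2:ℝ)^2 * (z.im * (γ•z:ℍ).im)) ≠ 0)]
    ring
  set N := (c*z.re + (a - c*(xm+xp)))^2 + (c*z.im)^2 with hNdef
  have hdet := det_entries γ
  rw [h00, h01, h10, h11] at hdet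
  have key : Real.sinh (dist z (γ•z) / 2)^2 * (4*z.im^2) * N
      = (z.re * N - ((a*z.re + -(c*xm*xp)) * (c*z.re + (a - c*(xm+xp))) + a*c*z.im^2))^2
        + (z.im * N - z.im)^2 := by
    calc Real.sinh (dist z (γ•z) / 2)^2 * (4*z.im^2) * N
        = Real.sinh (dist z (γ•z) / 2)^2 * (4 * z.im * ((γ•z:ℍ).im * N)) * N := by
          rw [hw2]; ring
      _ = (((z.re - (γ•z : ℍ).re)^2 + (z.im - (γ•z : ℍ).im)^2)) * N^2 := by
          rw [← hsq]; ring
      _ = (z.re * N - (γ•z : ℍ).re * N)^2 + (z.im * N - (γ•z : ℍ).im * N)^2 := by ring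
      _ = _ := by rw [hw1, hw2]
  have key2 : (z.re * N - ((a*z.re + -(c*xm*xp)) * (c*z.re + (a - c*(xm+xp))) + a*c*z.im^2))^2
        + (z.im * N - z.im)^2
      = (c^2 * (((z.re-xm)*(z.re-xp) + z.im^2)^2 + (xp-xm)^2*z.im^2)) * N := by
    rw [hNdef]
    linear_combination (z.im^2*(2*((c*z.re + (a - c*(xm+xp)))^2 + (c*z.im)^2) - 1
      - (a*(a - c*(xm+xp)) - -(c*xm*xp)*c))) * hdet
  exact mul_right_cancel₀ (ne_of_gt hN) (key.trans key2)


section axischar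
variable (γ : SL(2,ℝ)) (a c xm xp : ℝ)

lemma dist_ge (h00 : γ 0 0 = a) (h01 : γ 0 1 = -(c*xm*xp)) (h10 : γ 1 0 = c)
    (h11 : γ 1 1 = a - c*(xm+xp)) (hc : c ≠ 0) (hlt : xm < xp) (z : ℍ) :
    2 * Real.arsinh (|c| * (xp - xm) / 2) ≤ dist z (γ•z) := by
  have hd := disp γ a c xm xp h00 h01 h10 h11 z
  have hzim := z.im_pos
  have hs1 : 0 ≤ Real.sinh (dist z (γ•z) / 2) := by
    rw [Real.sinh_nonneg_iff]; positivity
  have hs2 : Real.sinh (2 * Real.arsinh (|c| * (xp - xm) / 2) / 2) = |c| * (xp - xm) / 2 := by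
    rw [mul_div_cancel_left₀ _ (two_ne_zero), Real.sinh_arsinh]
  have habs : |c|^2 = c^2 := sq_abs c
  have h1 : (|c| * (xp - xm) / 2)^2 ≤ Real.sinh (dist z (γ•z) / 2)^2 := by
    rw [div_pow, mul_pow, habs]
    nlinarith [sq_nonneg ((z.re-xm)*(z.re-xp) + z.im^2), mul_pos hzim hzim, sq_nonneg c]
  have h2 : |c| * (xp - xm) / 2 ≤ Real.sinh (dist z (γ•z) / 2) := by
    have hnn : 0 ≤ |c| * (xp - xm) / 2 := by
      have : (0:ℝ) ≤ xp - xm := by linarith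
      positivity
    exact le_of_pow_le_pow_left₀ two_ne_zero hs1 h1
  have h3 : Real.sinh (2 * Real.arsinh (|c| * (xp - xm) / 2) / 2)
      ≤ Real.sinh (dist z (γ•z) / 2) := by rw [hs2]; exact h2
  have := Real.sinh_le_sinh.mp h3
  linarith

lemma dist_eq_iff_axis (h00 : γ 0 0 = a) (h01 : γ 0 1 = -(c*xm*xp)) (h10 : γ 1 0 = c)
    (h11 : γ 1 1 = a - c*(xm+xp)) (hc : c ≠ 0) (hlt : xm < xp) (z : ℍ) :
    dist z (γ•z) = 2 * Real.arsinh (|c| * (xp - xm) / 2)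
      ↔ (z.re - xm)*(z.re - xp) + z.im^2 = 0 := by
  have hd := disp γ a c xm xp h00 h01 h10 h11 z
  have hzim := z.im_pos
  have habs : |c|^2 = c^2 := sq_abs c
  have hs2 : Real.sinh (2 * Real.arsinh (|c| * (xp - xm) / 2) / 2) = |c| * (xp - xm) / 2 := by
    rw [mul_div_cancel_left₀ _ (two_ne_zero), Real.sinh_arsinh]
  constructor
  · intro h
    rw [h] at hd
    have h2 : Real.sinh (2 * Real.arsinh (|c| * (xp - xm) / 2) / 2)^2 = c^2 * (xp-xm)^2/4 := by
      rw [hs2]; rw [div_pow, mul_pow, habs]; ring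
    have h3 : c^2 * (((z.re-xm)*(z.re-xp) + z.im^2))^2 = 0 := by
      linear_combination (4*z.im^2)*h2 - hd
    have h4 : ((z.re-xm)*(z.re-xp) + z.im^2)^2 = 0 := by
      rcases mul_eq_zero.mp h3 with h | h
      · exact absurd h (pow_ne_zero 2 hc)
      · exact h
    exact (pow_eq_zero_iff two_ne_zero).mp h4
  · intro h
    rw [h] at hd
    have hs1 : 0 ≤ Real.sinh (dist z (γ•z) / 2) := by
      rw [Real.sinh_nonneg_iff]; positivity
    have heq : Real.sinh (dist z (γ•z) / 2) = |c| * (xp - xm) / 2 := by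
      have hnn : 0 ≤ |c| * (xp - xm) / 2 := by
        have : (0:ℝ) ≤ xp - xm := by linarith
        positivity
      apply sq_eq_of_nonneg hs1 hnn
      rw [div_pow, mul_pow, habs]
      apply mul_right_cancel₀ (show (4*z.im^2) ≠ 0 by positivity)
      linear_combination hd
    have : dist z (γ•z) / 2 = Real.arsinh (|c| * (xp - xm) / 2) := by
      rw [← Real.arsinh_sinh (dist z (γ•z) / 2), heq]
    linarith

lemma transLength_eq (h00 : γ 0 0 = a) (h01 : γ 0 1 = -(c*xm*xp)) (h10 : γ 1 0 = c)
    (h11 : γ 1 1 = a - c*(xm+xp)) (hc : c ≠ 0) (hlt : xm < xp) :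
    transLength γ = 2 * Real.arsinh (|c| * (xp - xm) / 2) := by
  set L := 2 * Real.arsinh (|c| * (xp - xm) / 2)
  have hbdd : BddBelow (Set.range fun z : ℍ => dist z (γ • z)) := by
    refine ⟨L, ?_⟩
    rintro _ ⟨z, rfl⟩
    exact dist_ge γ a c xm xp h00 h01 h10 h11 hc hlt z
  have hpos : (0:ℝ) < (xp - xm)/2 := by linarith
  set z0 : ℍ := ⟨⟨(xm+xp)/2, (xp-xm)/2⟩, hpos⟩ with hz0
  have hz0re : z0.re = (xm+xp)/2 := rfl
  have hz0im : z0.im = (xp-xm)/2 := rfl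
  have h0 : dist z0 (γ•z0) = L := by
    rw [dist_eq_iff_axis γ a c xm xp h00 h01 h10 h11 hc hlt z0, hz0re, hz0im]
    ring
  apply le_antisymm
  · calc transLength γ ≤ dist z0 (γ•z0) := ciInf_le hbdd z0
      _ = L := h0
  · exact le_ciInf (dist_ge γ a c xm xp h00 h01 h10 h11 hc hlt)

lemma axis_iff (h00 : γ 0 0 = a) (h01 : γ 0 1 = -(c*xm*xp)) (h10 : γ 1 0 = c)
    (h11 : γ 1 1 = a - c*(xm+xp)) (hc : c ≠ 0) (hlt : xm < xp) (z : ℍ) :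
    z ∈ Axis γ ↔ (z.re - xm)*(z.re - xp) + z.im^2 = 0 := by
  rw [← dist_eq_iff_axis γ a c xm xp h00 h01 h10 h11 hc hlt z]
  unfold Axis
  rw [Set.mem_setOf_eq, transLength_eq γ a c xm xp h00 h01 h10 h11 hc hlt]

end axischar

lemma sinh_abs' (x : ℝ) : Real.sinh |x| = |Real.sinh x| := by
  rcases le_or_gt 0 x with h | h
  · rw [abs_of_nonneg h, abs_of_nonneg (Real.sinh_nonneg_iff.mpr h)]
  · rw [abs_of_neg h, abs_of_nonpos (Real.sinh_nonpos_iff.mpr h.le), Real.sinh_neg]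

section circledist
variable (xm xp : ℝ)

lemma circle_bounds (hlt : xm < xp) (z : ℍ)
    (hz : (z.re - xm)*(z.re - xp) + z.im^2 = 0) : xm < z.re ∧ z.re < xp := by
  have h := z.im_pos
  constructor
  · nlinarith
  · nlinarith

lemma dist_circle (hlt : xm < xp) (z w : ℍ)
    (hz : (z.re - xm)*(z.re - xp) + z.im^2 = 0)
    (hw : (w.re - xm)*(w.re - xp) + w.im^2 = 0) :
    dist z w = |Real.log (z.im / (z.re - xm)) - Real.log (w.im / (w.re - xm))| := by
  obtain ⟨hz1, hz2⟩ := circle_bounds xm xp hlt z hz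
  obtain ⟨hw1, hw2⟩ := circle_bounds xm xp hlt w hw
  have hazpos : 0 < z.re - xm := by linarith
  have hawpos : 0 < w.re - xm := by linarith
  have hzim := z.im_pos
  have hwim := w.im_pos
  set Tz := z.im / (z.re - xm) with hTzdef
  set Tw := w.im / (w.re - xm) with hTwdef
  have hTz : 0 < Tz := by positivity
  have hTw : 0 < Tw := by positivity
  set δ := Real.log Tz - Real.log Tw with hδdef
  -- sinh(δ/2) * (2 √Tz √Tw) = Tz - Tw
  have hea : Real.exp (δ/2) = Real.sqrt Tz / Real.sqrt Tw := by
    rw [Real.exp_half, hδdef, Real.exp_sub, Real.exp_log hTz, Real.exp_log hTw,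
      Real.sqrt_div hTz.le]
  have heb : Real.exp (-(δ/2)) = Real.sqrt Tw / Real.sqrt Tz := by
    rw [show -(δ/2) = (Real.log Tw - Real.log Tz)/2 by rw [hδdef]; ring,
      Real.exp_half, Real.exp_sub, Real.exp_log hTz, Real.exp_log hTw,
      Real.sqrt_div hTw.le]
  have hsTz : Real.sqrt Tz ≠ 0 := by positivity
  have hsTw : Real.sqrt Tw ≠ 0 := by positivity
  have hsinh : Real.sinh (δ/2) * (2 * Real.sqrt Tz * Real.sqrt Tw) = Tz - Tw := by
    rw [Real.sinh_eq, hea, heb]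
    rw [div_sub_div _ _ hsTw hsTz, Real.mul_self_sqrt hTz.le, Real.mul_self_sqrt hTw.le,
      div_div, div_mul_eq_mul_div,
      div_eq_iff (by positivity : (Real.sqrt Tw * Real.sqrt Tz * 2) ≠ 0)]
    ring
  -- rewrite the distance
  rw [UpperHalfPlane.dist_eq]
  have habs : |δ| = 2 * Real.arsinh (Real.sinh (|δ| / 2)) := by
    rw [Real.arsinh_sinh]; ring
  rw [habs]
  congr 1
  rw [show |δ| / 2 = |δ/2| by rw [abs_div]; norm_num, sinh_abs']
  congr 1
  -- now show dist (z:ℂ) w / (2 √(z.im w.im)) = |sinh (δ/2)|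
  have hX : 0 ≤ dist (z:ℂ) (w:ℂ) / (2 * Real.sqrt (z.im * w.im)) := by positivity
  apply sq_eq_of_nonneg hX (abs_nonneg _)
  rw [sq_abs]
  -- squares
  have e1 : (dist (z:ℂ) (w:ℂ) / (2 * Real.sqrt (z.im * w.im)))^2 * (4*(z.im*w.im))
      = (z.re - w.re)^2 + (z.im - w.im)^2 := by
    rw [div_pow, mul_pow, Real.sq_sqrt (by positivity : (0:ℝ) ≤ z.im * w.im),
      Complex.dist_eq_re_im, Real.sq_sqrt (by positivity)]
    simp only [UpperHalfPlane.coe_re, UpperHalfPlane.coe_im]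
    field_simp
    norm_num
  have e2 : Real.sinh (δ/2)^2 * (4*(Tz*Tw)) = (Tz - Tw)^2 := by
    have h4 : (2 * Real.sqrt Tz * Real.sqrt Tw)^2 = 4*(Tz*Tw) := by
      rw [mul_pow, mul_pow, Real.sq_sqrt hTz.le, Real.sq_sqrt hTw.le]; ring
    calc Real.sinh (δ/2)^2 * (4*(Tz*Tw))
        = (Real.sinh (δ/2) * (2 * Real.sqrt Tz * Real.sqrt Tw))^2 := by
          rw [mul_pow, h4]
      _ = (Tz - Tw)^2 := by rw [hsinh]
  have e3z : Tz * (z.re - xm) = z.im := div_mul_cancel₀ _ (ne_of_gt hazpos)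
  have e3w : Tw * (w.re - xm) = w.im := div_mul_cancel₀ _ (ne_of_gt hawpos)
  have hcross : (Tz - Tw) * ((z.re - xm)*(w.re - xm)) = z.im*(w.re - xm) - w.im*(z.re - xm) := by
    rw [hTzdef, hTwdef]
    field_simp
  set K := 4*(z.im*w.im)*((z.re - xm)^2*(w.re - xm)^2) with hKdef
  have hKpos : 0 < K := by positivity
  apply mul_right_cancel₀ (ne_of_gt hKpos)
  have hleft : (dist (z:ℂ) (w:ℂ) / (2 * Real.sqrt (z.im * w.im)))^2 * K
      = ((z.re - w.re)^2 + (z.im - w.im)^2) * ((z.re - xm)^2*(w.re - xm)^2) := by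
    rw [hKdef, ← e1]; ring
  have hright : Real.sinh (δ/2)^2 * K
      = (z.im*(w.re - xm) - w.im*(z.re - xm))^2 * ((z.re - xm)*(w.re - xm)) := by
    have hKeq : K = (4*(Tz*Tw)) * ((z.re - xm)*(w.re - xm))^3 := by
      rw [hKdef, ← e3z, ← e3w]; ring
    calc Real.sinh (δ/2)^2 * K
        = (Real.sinh (δ/2)^2 * (4*(Tz*Tw))) * ((z.re - xm)*(w.re - xm))^3 := by
          rw [hKeq]; ring
      _ = (Tz - Tw)^2 * ((z.re - xm)*(w.re - xm))^3 := by rw [e2]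
      _ = ((Tz - Tw) * ((z.re - xm)*(w.re - xm)))^2 * ((z.re - xm)*(w.re - xm)) := by ring
      _ = _ := by rw [hcross]
  rw [hleft, hright]
  linear_combination (((z.re-xm)*(w.re-xm) - (w.re-xm)^2) * ((z.re-xm)*(w.re-xm))) * hz
    + (((z.re-xm)*(w.re-xm) - (z.re-xm)^2) * ((z.re-xm)*(w.re-xm))) * hw

end circledist

lemma abs_add_abs_between (x y z : ℝ) (h : (y - x)*(y - z) ≤ 0) :
    |x - y| + |y - z| = |x - z| := by
  rcases mul_nonpos_iff.mp h with ⟨h1, h2⟩ | ⟨h1, h2⟩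
  · rw [abs_of_nonpos (by linarith), abs_of_nonpos (by linarith), abs_of_nonpos (by linarith)]
    ring
  · rw [abs_of_nonneg (by linarith), abs_of_nonneg (by linarith), abs_of_nonneg (by linarith)]
    ring

section umono
variable (xm xp : ℝ)

lemma u_le_u (hlt : xm < xp) (z w : ℍ)
    (hz : (z.re - xm)*(z.re - xp) + z.im^2 = 0)
    (hw : (w.re - xm)*(w.re - xp) + w.im^2 = 0) :
    Real.log (z.im / (z.re - xm)) ≤ Real.log (w.im / (w.re - xm)) ↔ w.re ≤ z.re := by
  obtain ⟨hz1, hz2⟩ := circle_bounds xm xp hlt z hz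
  obtain ⟨hw1, hw2⟩ := circle_bounds xm xp hlt w hw
  have hazpos : 0 < z.re - xm := by linarith
  have hawpos : 0 < w.re - xm := by linarith
  have hzim := z.im_pos
  have hwim := w.im_pos
  rw [Real.log_le_log_iff (by positivity) (by positivity)]
  rw [div_le_div_iff₀ hazpos hawpos]
  have hsq : (w.im*(z.re-xm))^2 - (z.im*(w.re-xm))^2
      = (z.re-xm)*(w.re-xm)*(xp-xm)*(z.re-w.re) := by
    linear_combination ((z.re-xm)^2)*hw - ((w.re-xm)^2)*hz
  constructor
  · intro h
    by_contra hcon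
    push_neg at hcon
    have hneg : (w.im*(z.re-xm))^2 - (z.im*(w.re-xm))^2 < 0 := by
      rw [hsq]
      have h1 : z.re - w.re < 0 := by linarith
      have h2 : 0 < (z.re-xm)*(w.re-xm)*(xp-xm) := by
        have : 0 < xp - xm := by linarith
        positivity
      exact mul_neg_of_pos_of_neg h2 h1
    nlinarith [mul_pos hzim hawpos, mul_pos hwim hazpos]
  · intro h
    have hge : 0 ≤ (w.im*(z.re-xm))^2 - (z.im*(w.re-xm))^2 := by
      rw [hsq]
      have h1 : 0 ≤ z.re - w.re := by linarith
      have h2 : 0 ≤ (z.re-xm)*(w.re-xm)*(xp-xm) := by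
        have : 0 ≤ xp - xm := by linarith
        positivity
      exact mul_nonneg h2 h1
    nlinarith [mul_pos hzim hawpos, mul_pos hwim hazpos]

end umono

section rot
variable (v : SL(2,ℝ))

lemma vray_re (t : ℝ) : (vray t).re = 0 := rfl
lemma vray_im (t : ℝ) : (vray t).im = Real.exp t := rfl

lemma vray_coe (t : ℝ) : ((vray t : ℍ) : ℂ) = (Real.exp t : ℂ) * Complex.I := by
  apply Complex.ext
  · simp [vray, UpperHalfPlane.coe]
  · simp [vray, UpperHalfPlane.coe, Complex.exp_ofReal_re]

lemma rot_entries (hv0 : v • (UpperHalfPlane.I : ℍ) = UpperHalfPlane.I) :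
    v 1 1 = v 0 0 ∧ v 0 1 = -(v 1 0) ∧ (v 0 0)^2 + (v 1 0)^2 = 1 := by
  have h := congrArg (UpperHalfPlane.coe) hv0
  rw [smul_coe] at h
  have hden := denom_ne' (v 1 0) (v 1 1) UpperHalfPlane.I (sl2_ne_zero_row v)
  rw [UpperHalfPlane.coe_I] at h hden
  rw [div_eq_iff hden] at h
  have h1 := congrArg Complex.re h
  have h2 := congrArg Complex.im h
  simp [Complex.ext_iff, Complex.mul_re, Complex.mul_im] at h1 h2
  have hdet := det_entries v
  refine ⟨by linarith, by linarith, ?_⟩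
  linear_combination hdet + (v 0 0 : ℝ) * h2 + (v 1 0 : ℝ) * h1

lemma rot_limit (w : ℂ)
    (hvend : Tendsto (fun t : ℝ => ((v • vray t : ℍ) : ℂ)) atTop (nhds w)) :
    v 1 0 ≠ 0 ∧ ((v 0 0 : ℂ)) / ((v 1 0 : ℂ)) = w := by
  have hcoe : ∀ t : ℝ, ((v • vray t : ℍ) : ℂ)
      = ((v 0 0 : ℂ) * ((Real.exp t : ℂ) * Complex.I) + (v 0 1 : ℂ))
        / ((v 1 0 : ℂ) * ((Real.exp t : ℂ) * Complex.I) + (v 1 1 : ℂ)) := by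
    intro t
    rw [smul_coe, vray_coe]
  have hden : ∀ t : ℝ, ((v 1 0 : ℂ) * ((Real.exp t : ℂ) * Complex.I) + (v 1 1 : ℂ)) ≠ 0 := by
    intro t
    have := denom_ne' (v 1 0) (v 1 1) (vray t) (sl2_ne_zero_row v)
    rwa [vray_coe] at this
  have hIE : ∀ t : ℝ, ((Real.exp t : ℂ) * Complex.I) ≠ 0 := by
    intro t
    exact mul_ne_zero (Complex.ofReal_ne_zero.mpr (Real.exp_ne_zero t)) Complex.I_ne_zero
  rcases eq_or_ne (v 1 0) 0 with h10 | h10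
  · exfalso
    have hdet := det_entries v
    rw [h10] at hdet
    simp at hdet
    have h11 : v 1 1 ≠ 0 := by
      intro h'
      rw [h'] at hdet
      simp at hdet
    -- im of the function tends to atTop
    have him : ∀ t : ℝ, (v • vray t : ℍ).im * (v 1 1)^2 = Real.exp t := by
      intro t
      have h := (smul_coords v (vray t)).2
      rw [vray_re, vray_im, h10] at h
      simpa using h
    have hv11sq : 0 < (v 1 1)^2 := by positivity
    have him' : ∀ t : ℝ, ((v • vray t : ℍ) : ℂ).im = Real.exp t * ((v 1 1)^2)⁻¹ := by
      intro t
      rw [UpperHalfPlane.coe_im, ← him t]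
      field_simp
    have htop : Tendsto (fun t : ℝ => ((v • vray t : ℍ) : ℂ).im) atTop atTop := by
      apply Tendsto.congr (fun t => (him' t).symm)
      exact Tendsto.atTop_mul_const (by positivity) Real.tendsto_exp_atTop
    have hnhds : Tendsto (fun t : ℝ => ((v • vray t : ℍ) : ℂ).im) atTop (nhds w.im) :=
      (Complex.continuous_im.tendsto w).comp hvend
    exact not_tendsto_nhds_of_tendsto_atTop htop w.im hnhds
  · refine ⟨h10, ?_⟩
    have h10' : (v 1 0 : ℂ) ≠ 0 := by exact_mod_cast h10
    have hinv : Tendsto (fun t : ℝ => ((Real.exp t : ℂ) * Complex.I)⁻¹) atTop (nhds 0) := by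
      rw [tendsto_zero_iff_norm_tendsto_zero]
      have : ∀ t : ℝ, ‖((Real.exp t : ℂ) * Complex.I)⁻¹‖ = Real.exp (-t) := by
        intro t
        rw [norm_inv, norm_mul, Complex.norm_I, mul_one, Complex.norm_real,
          Real.norm_eq_abs, abs_of_pos (Real.exp_pos t), ← Real.exp_neg]
      apply Tendsto.congr (fun t => (this t).symm)
      exact Real.tendsto_exp_neg_atTop_nhds_zero
    have h2 : Tendsto (fun t : ℝ =>
        ((v 0 0 : ℂ) + (v 0 1 : ℂ) * ((Real.exp t : ℂ) * Complex.I)⁻¹)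
          / ((v 1 0 : ℂ) + (v 1 1 : ℂ) * ((Real.exp t : ℂ) * Complex.I)⁻¹)) atTop
        (nhds ((v 0 0 : ℂ) / (v 1 0 : ℂ))) := by
      have hnum : Tendsto (fun t : ℝ =>
          (v 0 0 : ℂ) + (v 0 1 : ℂ) * ((Real.exp t : ℂ) * Complex.I)⁻¹) atTop
          (nhds ((v 0 0 : ℂ) + (v 0 1 : ℂ) * 0)) :=
        tendsto_const_nhds.add (tendsto_const_nhds.mul hinv)
      have hden2 : Tendsto (fun t : ℝ =>
          (v 1 0 : ℂ) + (v 1 1 : ℂ) * ((Real.exp t : ℂ) * Complex.I)⁻¹) atTop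
          (nhds ((v 1 0 : ℂ) + (v 1 1 : ℂ) * 0)) :=
        tendsto_const_nhds.add (tendsto_const_nhds.mul hinv)
      have := hnum.div hden2 (by simpa using h10')
      simp at this ⊢; exact this
    have heq : ∀ t : ℝ, ((v • vray t : ℍ) : ℂ)
        = ((v 0 0 : ℂ) + (v 0 1 : ℂ) * ((Real.exp t : ℂ) * Complex.I)⁻¹)
          / ((v 1 0 : ℂ) + (v 1 1 : ℂ) * ((Real.exp t : ℂ) * Complex.I)⁻¹) := by
      intro t
      rw [hcoe t]
      rw [div_eq_div_iff (hden t) ?_]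
      · field_simp
      · intro hzero
        apply hden t
        have := congrArg (· * ((Real.exp t : ℂ) * Complex.I)) hzero
        simp only [zero_mul] at this
        rw [← this]
        field_simp
    have h3 : Tendsto (fun t : ℝ => ((v • vray t : ℍ) : ℂ)) atTop
        (nhds ((v 0 0 : ℂ) / (v 1 0 : ℂ))) := by
      apply Tendsto.congr (fun t => (heq t).symm)
      exact h2
    exact tendsto_nhds_unique h3 hvend

end rot


set_option maxHeartbeats 2000000 in
theorem winding_crosses_axis
    (γ : SL(2, ℝ)) (hγ : IsHyperbolic γ)
    (xm xp : ℝ) (hfm : IsFixedPt γ xm) (hfp : IsFixedPt γ xp)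
    (hm : xm < 0) (hp : 0 < xp) (hc : γ 1 0 ≠ 0)
    (v : SL(2, ℝ)) (hv0 : v • (UpperHalfPlane.I : ℍ) = UpperHalfPlane.I)
    (hvend : Tendsto (fun t : ℝ => ((v • vray t : ℍ) : ℂ)) atTop
      (nhds ((γ 0 0 / γ 1 0 : ℝ) : ℂ)))
    (tγ : ℝ) (htγ : 0 ≤ tγ) (haxis : vray tγ ∈ Axis γ) :
    (∃ t' : ℝ, 0 ≤ t' ∧ (v • vray t' : ℍ) ∈ Axis γ) ∧
    ∀ t' : ℝ, 0 ≤ t' → (v • vray t' : ℍ) ∈ Axis γ →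
      dist (vray tγ) (v • vray t' : ℍ) + dist (v • vray t' : ℍ) (γ • vray tγ : ℍ) =
          dist (vray tγ) (γ • vray tγ : ℍ) ∧
      dist (vray tγ) (γ • vray tγ : ℍ) = transLength γ ∧
      dist (v • vray t' : ℍ) (vray tγ) ≤ transLength γ ∧
      dist (v • vray t' : ℍ) (γ • vray tγ : ℍ) ≤ transLength γ ∧
      |tγ - t'| ≤ transLength γ := by
  have hlt : xm < xp := hm.trans hp
  set a := γ 0 0 with ha
  set b := γ 0 1 with hbd
  set c := γ 1 0 with hcd
  set dd := γ 1 1 with hdd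
  -- basic relations on entries
  have hda : γ 1 1 = a - c * (xm + xp) := by
    have key : (xm - xp) * (c * (xm + xp) + (dd - a)) = 0 := by
      unfold IsFixedPt at hfm hfp
      linear_combination hfm - hfp
    have h2 := (mul_eq_zero.mp key).resolve_left (by intro h; exact (ne_of_lt hlt) (by linarith))
    rw [← hdd]
    linarith only [h2]
  have hb : γ 0 1 = -(c * xm * xp) := by
    unfold IsFixedPt at hfm
    rw [← hbd]
    have hda' : dd = a - c * (xm + xp) := hda
    linear_combination xm * hda' - hfm
  have hdet := det_entries γ
  rw [← ha, ← hbd, ← hcd, ← hdd] at hdet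
  have hda' : dd = a - c * (xm + xp) := hda
  have hb' : b = -(c * xm * xp) := hb
  have hdet' : (a - c * xm) * (a - c * xp) = 1 := by
    linear_combination hdet - a * hda' + c * hb'
  -- Y and circle equation of p
  set Y := Real.exp tγ with hYdef
  have hY1 : 1 ≤ Y := by
    rw [hYdef, show (1:ℝ) = Real.exp 0 by simp]
    exact Real.exp_le_exp.mpr htγ
  have hpcirc : ((vray tγ).re - xm) * ((vray tγ).re - xp) + (vray tγ).im ^ 2 = 0 := by
    rw [← axis_iff γ a c xm xp ha.symm hb hcd.symm hda hc hlt]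
    exact haxis
  have hYsq : Y ^ 2 = -(xm * xp) := by
    have := hpcirc
    rw [vray_re, vray_im, ← hYdef] at this
    linear_combination this
  -- entries of v
  obtain ⟨hv11, hv01, hvnorm⟩ := rot_entries v hv0
  obtain ⟨hv10, hvlim⟩ := rot_limit v _ hvend
  set m := v 1 0 with hmd
  have hrel : c * v 0 0 = a * m := by
    have h1 : ((v 0 0 : ℝ) : ℂ) / ((m : ℝ) : ℂ) = ((a / c : ℝ) : ℂ) := hvlim
    rw [Complex.ofReal_div] at h1
    rw [div_eq_div_iff (by exact_mod_cast hv10) (by exact_mod_cast hc)] at h1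
    have h2 : v 0 0 * c = a * m := by exact_mod_cast h1
    linarith only [h2]
  -- F and membership claim
  set F := -((c + a * xm) * (c + a * xp)) with hFdef
  have hF1 : F = 1 + (a^2 + c^2) * (Y^2 - 1) := by
    rw [hFdef]
    have h := hYsq
    linear_combination hdet' - (a^2 + c^2) * h
  have hFge : 1 ≤ F := by
    rw [hF1]
    have h1 : 0 ≤ Y^2 - 1 := sub_nonneg.mpr (by simpa using pow_le_pow_left₀ zero_le_one hY1 2)
    have h2 : (0:ℝ) ≤ a^2 + c^2 := by positivity
    linarith only [mul_nonneg h2 h1]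
  have hFpos : 0 < F := by linarith only [hFge]
  have claim : ∀ t : ℝ, ((v • vray t : ℍ) ∈ Axis γ ↔ Real.exp t ^ 2 = F) := by
    intro t
    rw [axis_iff γ a c xm xp ha.symm hb hcd.symm hda hc hlt]
    set q := (v • vray t : ℍ) with hq
    set E := Real.exp t with hE
    have hco := smul_coords v (vray t)
    rw [vray_re, vray_im, hv01, hv11, ← hmd, ← hE] at hco
    obtain ⟨hqre, hqim⟩ := hco
    set N := (m * 0 + v 0 0)^2 + (m * E)^2 with hN
    have hNpos : 0 < N := by
      rw [hN]
      have : (m * E)^2 > 0 := by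
        have : m * E ≠ 0 := mul_ne_zero hv10 (Real.exp_ne_zero t)
        positivity
      positivity
    simp only [mul_zero, zero_add] at hqre hqim hN
    -- key algebraic identity
    have key : ((q.re - xm) * (q.re - xp) + q.im^2) * (N^2 * c^2)
        = m^2 * N * (E^2 - F) := by
      rw [hN, hFdef]
      linear_combination (c^2*(q.re*((v 0 0)^2 + (m*E)^2) + ((-m)*(v 0 0) + (v 0 0)*m*E^2)
          - (xm+xp)*((v 0 0)^2 + (m*E)^2))) * hqre
        + (c^2*(q.im*((v 0 0)^2 + (m*E)^2) + E)) * hqim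
        + (((v 0 0)^2 + (m*E)^2)*E^2*(c*(v 0 0) + a*m - (xm+xp)*c*m)
          + ((v 0 0)^2 + (m*E)^2)*(xm*(c*m + xp*c*(v 0 0)) + xp*(c*m + xm*a*m))) * hrel
        + (((v 0 0)^2 + (m*E)^2)*E^2*m^2) * hdet'
        - (c^2*E^2*((v 0 0)^2 + m^2 + 1)) * hvnorm
    constructor
    · intro h
      rw [h, zero_mul] at key
      have h2 : E^2 - F = 0 := by
        rcases mul_eq_zero.mp key.symm with h' | h'
        · rcases mul_eq_zero.mp h' with h'' | h''
          · exact absurd h'' (pow_ne_zero 2 hv10)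
          · exact absurd h'' (ne_of_gt hNpos)
        · exact h'
      linarith only [h2]
    · intro h
      have h2 : E^2 - F = 0 := by linarith only [h]
      rw [h2, mul_zero] at key
      have h3 : ((q.re - xm) * (q.re - xp) + q.im^2) = 0 := by
        rcases mul_eq_zero.mp key with h' | h'
        · exact h'
        · exfalso
          rcases mul_eq_zero.mp h' with h'' | h''
          · exact absurd h'' (pow_ne_zero 2 (ne_of_gt hNpos))
          · exact absurd h'' (pow_ne_zero 2 hc)
      exact h3
  -- existence
  set t0 := Real.log F / 2 with ht0
  have ht0nn : 0 ≤ t0 := by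
    rw [ht0]
    have := Real.log_nonneg hFge
    linarith only [this]
  have hexp0 : Real.exp t0 ^ 2 = F := by
    rw [sq, ← Real.exp_add, ht0, show Real.log F / 2 + Real.log F / 2 = Real.log F by ring]
    exact Real.exp_log hFpos
  refine ⟨⟨t0, ht0nn, (claim t0).mpr hexp0⟩, ?_⟩
  -- main part
  intro t' ht' hmem
  have hE2 : Real.exp t' ^ 2 = F := (claim t').mp hmem
  set p := vray tγ with hpd
  set q := (v • vray t' : ℍ) with hqd
  set gp := (γ • vray tγ : ℍ) with hgpd
  have hL : dist p gp = transLength γ := haxis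
  have hqcirc : (q.re - xm) * (q.re - xp) + q.im ^ 2 = 0 := by
    rw [← axis_iff γ a c xm xp ha.symm hb hcd.symm hda hc hlt]
    exact hmem
  have hgp_mem : gp ∈ Axis γ := by
    show dist gp (γ • gp) = transLength γ
    calc dist gp (γ • gp) = dist (γ • p) (γ • (γ • p)) := rfl
      _ = dist p (γ • p) := dist_smul γ p (γ • p)
      _ = transLength γ := haxis
  have hgcirc : (gp.re - xm) * (gp.re - xp) + gp.im ^ 2 = 0 := by
    rw [← axis_iff γ a c xm xp ha.symm hb hcd.symm hda hc hlt]
    exact hgp_mem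
  -- coordinates of q
  have hco := smul_coords v (vray t')
  rw [vray_re, vray_im, hv01, hv11, ← hmd] at hco
  obtain ⟨hqre, _⟩ := hco
  simp only [mul_zero, zero_add] at hqre
  -- clean q.re equation
  have hqre2 : q.re * (a^2*m^2 + c^2*m^2*F) = a*c*m^2*(F-1) := by
    linear_combination c^2 * hqre
      + (c*m*(Real.exp t'^2 - 1) - q.re*(a*m + c*(v 0 0))) * hrel
      + (a*c*m^2 - q.re*c^2*m^2) * hE2
  have hFsub : F - 1 = (a^2+c^2)*(Y^2-1) := by linarith only [hF1]
  have hqre3 : q.re * (m^2*(a^2+c^2)*(c^2*Y^2+1-c^2)) = a*c*m^2*(a^2+c^2)*(Y^2-1) := by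
    linear_combination hqre2 + (a*c*m^2 - q.re*m^2*c^2) * hFsub
  -- coordinates of gp
  have hcg := smul_coords γ (vray tγ)
  rw [vray_re, vray_im, ← ha, ← hbd, ← hcd, ← hdd, ← hYdef] at hcg
  obtain ⟨hgre, _⟩ := hcg
  simp only [mul_zero, zero_add] at hgre
  have had : a * dd = 1 + c^2 * Y^2 := by
    linear_combination hdet + c * hb' - c^2 * hYsq
  have hgre2 : gp.re * (dd^2 + (c*Y)^2) = c*Y^2*(a+dd) := by
    linear_combination hgre + dd * hb' - c * dd * hYsq
  -- x-betweenness
  have hY2m1 : 0 ≤ Y^2 - 1 := sub_nonneg.mpr (by simpa using pow_le_pow_left₀ zero_le_one hY1 2)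
  set DqY := m^2*(a^2+c^2)*(c^2*Y^2+1-c^2) with hDqY
  set G1 := a*c*m^2*(a^2+c^2)*(Y^2-1) with hG1
  set Dg := dd^2 + (c*Y)^2 with hDg
  have hDqYpos : 0 < DqY := by
    rw [hDqY]
    have h1 : 0 < c^2*Y^2+1-c^2 := by
      have h2 : 0 ≤ c^2*(Y^2-1) := mul_nonneg (sq_nonneg c) hY2m1
      nlinarith only [h2]
    have h2 : 0 < m^2 := by positivity
    have h3 : 0 < a^2+c^2 := by positivity
    exact mul_pos (mul_pos h2 h3) h1
  have hDgpos : 0 < Dg := by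
    rw [hDg]
    have h1 : (c*Y)^2 > 0 := by
      have : c*Y ≠ 0 := mul_ne_zero hc (by positivity)
      positivity
    positivity
  have hclosed : G1 * (G1*Dg - (c*Y^2*(a+dd))*DqY)
      = -(c^2*m^4*(a^2+c^2)^2*(Y^2-1)*(a^2*Y^2+1+c^2*Y^2)) := by
    rw [hG1, hDg, hDqY]
    linear_combination ((c*m^2*(a^2+c^2))^2*(Y^2-1)*(a*dd*(Y^2-1) - 1)) * had
  have hX : q.re * (q.re - gp.re) ≤ 0 := by
    have hXeq : (q.re * (q.re - gp.re)) * (DqY^2 * Dg)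
        = G1 * (G1*Dg - (c*Y^2*(a+dd))*DqY) := by
      rw [hG1, hDg, hDqY]
      linear_combination ((dd^2 + (c*Y)^2)*(q.re*(m^2*(a^2+c^2)*(c^2*Y^2+1-c^2))
          + a*c*m^2*(a^2+c^2)*(Y^2-1)) - (m^2*(a^2+c^2)*(c^2*Y^2+1-c^2))*(gp.re*(dd^2 + (c*Y)^2))) * hqre3
        + (-((m^2*(a^2+c^2)*(c^2*Y^2+1-c^2))*(a*c*m^2*(a^2+c^2)*(Y^2-1)))) * hgre2
    have hXneg : (q.re * (q.re - gp.re)) * (DqY^2 * Dg) ≤ 0 := by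
      rw [hXeq, hclosed]
      have hnn : 0 ≤ c^2*m^4*(a^2+c^2)^2*(Y^2-1)*(a^2*Y^2+1+c^2*Y^2) := by
        have h2 : 0 ≤ a^2*Y^2+1+c^2*Y^2 := by positivity
        have h3 : 0 ≤ c^2*m^4*(a^2+c^2)^2 := by positivity
        exact mul_nonneg (mul_nonneg h3 hY2m1) h2
      linarith only [hnn]
    have hK : 0 < DqY^2 * Dg := by positivity
    by_contra hcon
    push_neg at hcon
    have := mul_pos hcon hK
    linarith only [this, hXneg]
  -- transfer to u coordinates
  set u : ℍ → ℝ := fun z => Real.log (z.im / (z.re - xm)) with hu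
  have hbet : (u q - u p) * (u q - u gp) ≤ 0 := by
    have hpre : p.re = 0 := vray_re tγ
    rcases mul_nonpos_iff.mp hX with ⟨h1, h2⟩ | ⟨h1, h2⟩
    · have hqp : u q ≤ u p := (u_le_u xm xp hlt q p hqcirc hpcirc).mpr (by rw [hpre]; exact h1)
      have hgq : u gp ≤ u q := (u_le_u xm xp hlt gp q hgcirc hqcirc).mpr (by linarith only [h2])
      exact mul_nonpos_iff.mpr (Or.inr ⟨by linarith only [hqp], by linarith only [hgq]⟩)
    · have hpq : u p ≤ u q := (u_le_u xm xp hlt p q hpcirc hqcirc).mpr (by rw [hpre]; linarith only [h1])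
      have hqg : u q ≤ u gp := (u_le_u xm xp hlt q gp hqcirc hgcirc).mpr (by linarith only [h2])
      exact mul_nonpos_iff.mpr (Or.inl ⟨by linarith only [hpq], by linarith only [hqg]⟩)
  -- distances along circle
  have du1 : dist p q = |u p - u q| := dist_circle xm xp hlt p q hpcirc hqcirc
  have du2 : dist q gp = |u q - u gp| := dist_circle xm xp hlt q gp hqcirc hgcirc
  have du3 : dist p gp = |u p - u gp| := dist_circle xm xp hlt p gp hpcirc hgcirc
  have hadd : dist p q + dist q gp = dist p gp := by
    rw [du1, du2, du3]
    exact abs_add_abs_between (u p) (u q) (u gp) hbet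
  have hd1 : dist p q ≤ transLength γ := by
    have := dist_nonneg (x := q) (y := gp)
    linarith only [this, hadd, hL]
  have hd2 : dist q gp ≤ transLength γ := by
    have := dist_nonneg (x := p) (y := q)
    linarith only [this, hadd, hL]
  refine ⟨hadd, hL, by rw [dist_comm]; exact hd1, hd2, ?_⟩
  -- |tγ - t'| ≤ L
  have hIp : dist p (vray 0) = tγ := by
    rw [hpd, dist_vray, sub_zero, abs_of_nonneg htγ]
  have hIq : dist q (vray 0) = t' := by
    have hv0' : (v • vray 0 : ℍ) = vray 0 := by rw [vray_zero]; exact hv0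
    calc dist q (vray 0) = dist (v • vray t' : ℍ) (v • vray 0 : ℍ) := by rw [hqd, hv0']
      _ = dist (vray t') (vray 0) := dist_smul v (vray t') (vray 0)
      _ = t' := by rw [dist_vray, sub_zero, abs_of_nonneg ht']
  have htri : |dist p (vray 0) - dist q (vray 0)| ≤ dist p q := abs_dist_sub_le p q (vray 0)
  rw [hIp, hIq] at htri
  linarith only [htri, hd1]


end BellisFormal
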